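/- For the distance-matrix map on continuous trees: given θ = (ℓ, b) ∈ T_{k,c} (so b_i < min(ℓ_i, ℓ_{i+1})), define D_{0j}(θ) = ℓ_j, D_{ij}(θ) = ℓ_i + ℓ_j − min{b_i, ..., b_{j-1}} for 1 ≤ i < j ≤ k, D symmetric with zero diagonal. Then D(θ) is a genuine distance matrix: it satisfies all triangle inequalities D_{ij} ≤ D_{ip} + D_{pj} for 0 ≤ i, j, p ≤ k. -/
import Mathlib


noncomputable section

/-- The distance matrix of the continuous tree with leaf heights `ℓ` and branch point
heights `b` (index `0` is the root, index `j ≥ 1` the `j`-th leaf):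
`D 0 j = ℓ_j` and `D i j = ℓ_i + ℓ_j − min {b_i, …, b_{j-1}}` for `1 ≤ i < j`
(here written 0-indexed), extended symmetrically with zero diagonal. -/
def Dmat (ℓ b : ℕ → ℝ) (i j : ℕ) : ℝ :=
  if i = j then 0
  else if i = 0 then ℓ (j - 1)
  else if j = 0 then ℓ (i - 1)
  else ℓ (i - 1) + ℓ (j - 1) - sInf (b '' Set.Icc (min i j - 1) (max i j - 2))

lemma bdd_img (b : ℕ → ℝ) (a c : ℕ) : BddBelow (b '' Set.Icc a c) :=
  ((Set.finite_Icc a c).image b).bddBelow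

lemma inf_le_b (b : ℕ → ℝ) {a c t : ℕ} (h : t ∈ Set.Icc a c) :
    sInf (b '' Set.Icc a c) ≤ b t :=
  csInf_le (bdd_img b a c) (Set.mem_image_of_mem b h)

section Aux

variable {k : ℕ} {ℓ b : ℕ → ℝ}

lemma inf_le_ell (hbl : ∀ i, i + 1 < k → b i < min (ℓ i) (ℓ (i + 1)))
    {x y : ℕ} (hx : 1 ≤ x) (hy : 1 ≤ y) (hxy : x ≠ y) (hxk : x ≤ k) (hyk : y ≤ k) :
    sInf (b '' Set.Icc (min x y - 1) (max x y - 2)) ≤ ℓ (x - 1) := by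
  rcases lt_or_gt_of_ne hxy with h | h
  · have hm1 : min x y = x := by omega
    have hm2 : max x y = y := by omega
    rw [hm1, hm2]
    have h1 : sInf (b '' Set.Icc (x - 1) (y - 2)) ≤ b (x - 1) :=
      inf_le_b b (Set.mem_Icc.mpr ⟨le_refl (x - 1), by omega⟩)
    have h2 := hbl (x - 1) (by omega)
    have h3 : b (x - 1) < ℓ (x - 1) := lt_of_lt_of_le h2 (min_le_left _ _)
    linarith
  · have hm1 : min x y = y := by omega
    have hm2 : max x y = x := by omega
    rw [hm1, hm2]
    have h1 : sInf (b '' Set.Icc (y - 1) (x - 2)) ≤ b (x - 2) :=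
      inf_le_b b (Set.mem_Icc.mpr ⟨by omega, le_refl (x - 2)⟩)
    have h2 := hbl (x - 2) (by omega)
    have h3 : b (x - 2) < ℓ (x - 2 + 1) := lt_of_lt_of_le h2 (min_le_right _ _)
    have he : x - 2 + 1 = x - 1 := by omega
    rw [he] at h3
    linarith

lemma inf_nonneg (hb : ∀ i, i + 1 < k → 0 ≤ b i)
    {x y : ℕ} (hx : 1 ≤ x) (hy : 1 ≤ y) (hxy : x ≠ y) (hxk : x ≤ k) (hyk : y ≤ k) :
    0 ≤ sInf (b '' Set.Icc (min x y - 1) (max x y - 2)) := by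
  apply Real.sInf_nonneg
  rintro z ⟨t, ht, rfl⟩
  rw [Set.mem_Icc] at ht
  exact hb t (by omega)

lemma key2 {i j p : ℕ} (hi : 1 ≤ i) (hj : 1 ≤ j) (hp : 1 ≤ p)
    (hij : i ≠ j) (hip : i ≠ p) (hpj : p ≠ j)
    (hik : i ≤ k) (hjk : j ≤ k) (hpk : p ≤ k) :
    min (sInf (b '' Set.Icc (min i p - 1) (max i p - 2)))
        (sInf (b '' Set.Icc (min p j - 1) (max p j - 2)))
      ≤ sInf (b '' Set.Icc (min i j - 1) (max i j - 2)) := by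
  apply le_csInf
  · exact Set.Nonempty.image b ⟨min i j - 1, Set.mem_Icc.mpr ⟨le_refl _, by omega⟩⟩
  · rintro z ⟨t, ht, rfl⟩
    rw [Set.mem_Icc] at ht
    have hcov : (min i p - 1 ≤ t ∧ t ≤ max i p - 2) ∨
        (min p j - 1 ≤ t ∧ t ≤ max p j - 2) := by omega
    rcases hcov with h | h
    · exact le_trans (min_le_left _ _) (inf_le_b b (Set.mem_Icc.mpr h))
    · exact le_trans (min_le_right _ _) (inf_le_b b (Set.mem_Icc.mpr h))

lemma Dmat_self (i : ℕ) : Dmat ℓ b i i = 0 := by simp [Dmat]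

lemma Dmat_nonneg (hℓ : ∀ i, i < k → 0 ≤ ℓ i)
    (hbl : ∀ i, i + 1 < k → b i < min (ℓ i) (ℓ (i + 1)))
    {i j : ℕ} (hik : i ≤ k) (hjk : j ≤ k) : 0 ≤ Dmat ℓ b i j := by
  unfold Dmat
  split_ifs with h1 h2 h3
  · exact le_refl 0
  · exact hℓ (j - 1) (by omega)
  · exact hℓ (i - 1) (by omega)
  · have h4 := inf_le_ell hbl (x := i) (y := j) (by omega) (by omega) h1 hik hjk
    have h5 := hℓ (j - 1) (by omega)
    linarith

end Aux

/-- **The tree parameters give a genuine distance matrix.** For `(ℓ, b)` with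
`0 ≤ b_i < min (ℓ_i, ℓ_{i+1})` and `ℓ ≥ 0`, the matrix `D(θ)` of pairwise distances
between the root and the `k` leaves satisfies all triangle inequalities
`D_{ij} ≤ D_{ip} + D_{pj}` for `0 ≤ i, j, p ≤ k`. -/
theorem distance_matrix_triangle (k : ℕ) (hk : 1 ≤ k) (ℓ b : ℕ → ℝ)
    (hℓ : ∀ i, i < k → 0 ≤ ℓ i) (hb : ∀ i, i + 1 < k → 0 ≤ b i)
    (hbl : ∀ i, i + 1 < k → b i < min (ℓ i) (ℓ (i + 1))) :
    ∀ i j p, i ≤ k → j ≤ k → p ≤ k →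
      Dmat ℓ b i j ≤ Dmat ℓ b i p + Dmat ℓ b p j := by
  intro i j p hik hjk hpk
  rcases eq_or_ne i j with rfl | hij
  · rw [Dmat_self]
    have h1 := Dmat_nonneg hℓ hbl hik hpk
    have h2 := Dmat_nonneg hℓ hbl hpk hik
    linarith
  rcases eq_or_ne p i with rfl | hpi
  · rw [Dmat_self]; linarith
  rcases eq_or_ne p j with rfl | hpj
  · rw [Dmat_self]; linarith
  -- all three indices are distinct
  rcases eq_or_ne i 0 with rfl | hi0
  · -- i = 0 : LHS = ℓ (j-1)
    have hj1 : 1 ≤ j := by omega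
    have hp1 : 1 ≤ p := by omega
    have e1 : Dmat ℓ b 0 j = ℓ (j - 1) := by
      unfold Dmat; rw [if_neg (by omega), if_pos rfl]
    have e2 : Dmat ℓ b 0 p = ℓ (p - 1) := by
      unfold Dmat; rw [if_neg (by omega), if_pos rfl]
    have e3 : Dmat ℓ b p j = ℓ (p - 1) + ℓ (j - 1) -
        sInf (b '' Set.Icc (min p j - 1) (max p j - 2)) := by
      unfold Dmat; rw [if_neg hpj, if_neg (by omega), if_neg (by omega)]
    rw [e1, e2, e3]
    have h4 := inf_le_ell hbl hp1 hj1 hpj hpk hjk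
    have h5 := hℓ (p - 1) (by omega)
    linarith
  rcases eq_or_ne j 0 with rfl | hj0
  · have hi1 : 1 ≤ i := by omega
    have hp1 : 1 ≤ p := by omega
    have e1 : Dmat ℓ b i 0 = ℓ (i - 1) := by
      unfold Dmat; rw [if_neg hij, if_neg hi0, if_pos rfl]
    have e2 : Dmat ℓ b p 0 = ℓ (p - 1) := by
      unfold Dmat; rw [if_neg hpj, if_neg (by omega), if_pos rfl]
    have e3 : Dmat ℓ b i p = ℓ (i - 1) + ℓ (p - 1) -
        sInf (b '' Set.Icc (min i p - 1) (max i p - 2)) := by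
      unfold Dmat; rw [if_neg (fun h => hpi h.symm), if_neg hi0, if_neg (by omega)]
    rw [e1, e2, e3]
    have h4 : sInf (b '' Set.Icc (min p i - 1) (max p i - 2)) ≤ ℓ (p - 1) :=
      inf_le_ell hbl hp1 hi1 hpi hpk hik
    rw [min_comm p i, max_comm p i] at h4
    have h5 := hℓ (p - 1) (by omega)
    linarith
  rcases eq_or_ne p 0 with rfl | hp0
  · have hi1 : 1 ≤ i := by omega
    have hj1 : 1 ≤ j := by omega
    have e1 : Dmat ℓ b i j = ℓ (i - 1) + ℓ (j - 1) -
        sInf (b '' Set.Icc (min i j - 1) (max i j - 2)) := by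
      unfold Dmat; rw [if_neg hij, if_neg hi0, if_neg hj0]
    have e2 : Dmat ℓ b i 0 = ℓ (i - 1) := by
      unfold Dmat; rw [if_neg (fun h => hpi h.symm), if_neg hi0, if_pos rfl]
    have e3 : Dmat ℓ b 0 j = ℓ (j - 1) := by
      unfold Dmat; rw [if_neg hpj, if_pos rfl]
    rw [e1, e2, e3]
    have h4 := inf_nonneg hb hi1 hj1 hij hik hjk
    linarith
  · -- all of i, j, p are at least 1 and pairwise distinct
    have hi1 : 1 ≤ i := by omega
    have hj1 : 1 ≤ j := by omega
    have hp1 : 1 ≤ p := by omega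
    have e1 : Dmat ℓ b i j = ℓ (i - 1) + ℓ (j - 1) -
        sInf (b '' Set.Icc (min i j - 1) (max i j - 2)) := by
      unfold Dmat; rw [if_neg hij, if_neg hi0, if_neg hj0]
    have e2 : Dmat ℓ b i p = ℓ (i - 1) + ℓ (p - 1) -
        sInf (b '' Set.Icc (min i p - 1) (max i p - 2)) := by
      unfold Dmat; rw [if_neg (fun h => hpi h.symm), if_neg hi0, if_neg hp0]
    have e3 : Dmat ℓ b p j = ℓ (p - 1) + ℓ (j - 1) -
        sInf (b '' Set.Icc (min p j - 1) (max p j - 2)) := by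
      unfold Dmat; rw [if_neg hpj, if_neg hp0, if_neg hj0]
    rw [e1, e2, e3]
    set A := sInf (b '' Set.Icc (min i p - 1) (max i p - 2)) with hA
    set B := sInf (b '' Set.Icc (min p j - 1) (max p j - 2)) with hB
    set C := sInf (b '' Set.Icc (min i j - 1) (max i j - 2)) with hC
    have hkey : min A B ≤ C :=
      key2 hi1 hj1 hp1 hij (fun h => hpi h.symm) hpj hik hjk hpk
    have hA' : A ≤ ℓ (p - 1) := by
      have := inf_le_ell hbl hp1 hi1 hpi hpk hik
      rwa [min_comm p i, max_comm p i] at this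
    have hB' : B ≤ ℓ (p - 1) := inf_le_ell hbl hp1 hj1 hpj hpk hjk
    have h5 := hℓ (p - 1) (by omega)
    rcases le_total A B with h | h
    · rw [min_eq_left h] at hkey; linarith
    · rw [min_eq_right h] at hkey; linarith

end
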